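/- In any unital ring R, [E(R), R] = [E(R), E(R)]. -/

import Mathlib

/-- The additive subgroup generated by commutators `a * b - b * a` with `a ∈ A`, `b ∈ B`. -/
def lieBr {R : Type*} [Ring R] (A B : Set R) : AddSubgroup R :=
  AddSubgroup.closure {z : R | ∃ a ∈ A, ∃ b ∈ B, z = a * b - b * a}

private lemma key_idem {R : Type*} [Ring R] (e x : R) (he : IsIdempotentElem e) :
    e * x - x * e ∈ lieBr ((AddSubgroup.closure {e : R | IsIdempotentElem e} : AddSubgroup R) : Set R)
      ((AddSubgroup.closure {e : R | IsIdempotentElem e} : AddSubgroup R) : Set R) := by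
  have he' : e * e = e := he
  have hae : ∀ a : R, a * e * e = a * e := fun a => by rw [mul_assoc, he']
  set u : R := e * x - e * x * e with hu
  set v : R := x * e - e * x * e with hv
  have hf : IsIdempotentElem (e + u) := by
    show (e + u) * (e + u) = e + u
    rw [hu]
    simp only [mul_sub, sub_mul, mul_add, add_mul, ← mul_assoc, he', hae]
    abel
  have hg : IsIdempotentElem (e + v) := by
    show (e + v) * (e + v) = e + v
    rw [hv]
    simp only [mul_sub, sub_mul, mul_add, add_mul, ← mul_assoc, he', hae]
    abel
  set E := (AddSubgroup.closure {e : R | IsIdempotentElem e} : AddSubgroup R)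
  have heE : e ∈ E := AddSubgroup.subset_closure he
  have hyE : u + v ∈ E := by
    have : u + v = ((e + u) - e) + ((e + v) - e) := by abel
    rw [this]
    exact add_mem (sub_mem (AddSubgroup.subset_closure hf) heE)
      (sub_mem (AddSubgroup.subset_closure hg) heE)
  have hkey : e * x - x * e = e * (u + v) - (u + v) * e := by
    rw [hu, hv]
    simp only [mul_sub, sub_mul, mul_add, add_mul, ← mul_assoc, he', hae]
    abel
  rw [hkey]
  exact AddSubgroup.subset_closure ⟨e, heE, u + v, hyE, rfl⟩

theorem stmt11 {R : Type*} [Ring R] :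
    lieBr ((AddSubgroup.closure {e : R | IsIdempotentElem e} : AddSubgroup R) : Set R) Set.univ =
    lieBr ((AddSubgroup.closure {e : R | IsIdempotentElem e} : AddSubgroup R) : Set R)
      ((AddSubgroup.closure {e : R | IsIdempotentElem e} : AddSubgroup R) : Set R) := by
  apply le_antisymm
  · rw [lieBr, AddSubgroup.closure_le]
    rintro z ⟨a, ha, b, -, rfl⟩
    induction ha using AddSubgroup.closure_induction with
    | mem e he => exact key_idem e b he
    | zero => simpa using (lieBr _ _).zero_mem
    | add a c _ _ iha ihc =>
        have : (a + c) * b - b * (a + c) = (a * b - b * a) + (c * b - b * c) := by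
          noncomm_ring
        rw [this]; exact add_mem iha ihc
    | neg a _ iha =>
        have : (-a) * b - b * (-a) = -(a * b - b * a) := by noncomm_ring
        rw [this]; exact neg_mem iha
  · rw [lieBr, AddSubgroup.closure_le]
    rintro z ⟨a, ha, b, hb, rfl⟩
    exact AddSubgroup.subset_closure ⟨a, ha, b, trivial, rfl⟩
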